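/- Let H be a Hilbert space and L : (a,b) → B(H) a function whose values are bounded nonnegative selfadjoint operators, nondecreasing in x (in the form order), such that L(x) converges strongly as x ↑ b to a bounded operator L(b). Then for every h in the closure of ran L(a), lim_{x↓a} ‖L(x)^{-1/2} L(a)^{1/2} h‖² = ‖h‖², where L(x)^{-1/2} denotes the Moore–Penrose pseudoinverse of L(x)^{1/2} and the limit L(a) = s-lim_{x↓a} L(x) exists, assuming ran L(a)^{1/2} ⊆ ran L(x)^{1/2} for all x. -/
import Mathlib


open scoped ComplexOrder ComplexInnerProductSpace

/-- Key step of Lemma 6.1: for a nondecreasing family `L(x)` of bounded nonnegative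
selfadjoint operators on `(a,b)` with strong limits `L(a)`, `L(b)` at the endpoints and
`ran L(a)^{1/2} ⊆ ran L(x)^{1/2}`, one has
`lim_{x↓a} ‖L(x)^{-1/2} L(a)^{1/2} h‖² = ‖h‖²` for every `h` in the closure of `ran L(a)`.
The square roots are encoded by `sq x` (resp. `sqA`), and the value of the Moore–Penrose
pseudoinverse `L(x)^{-1/2} (L(a)^{1/2} h)` is encoded by `v x`:
`sq x (v x) = sqA h` and `v x ⟂ ker (sq x)`. -/
theorem stmt_14 {H : Type*} [NormedAddCommGroup H] [InnerProductSpace ℂ H] [CompleteSpace H]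
    (a b : ℝ) (hab : a < b) (L : ℝ → (H →L[ℂ] H)) (La Lb : H →L[ℂ] H)
    (hsa : ∀ x ∈ Set.Ioo a b, IsSelfAdjoint (L x))
    (hpos : ∀ x ∈ Set.Ioo a b, ∀ f : H, 0 ≤ ⟪L x f, f⟫)
    (hmono : ∀ x ∈ Set.Ioo a b, ∀ y ∈ Set.Ioo a b, x ≤ y →
      ∀ f : H, (⟪L x f, f⟫).re ≤ (⟪L y f, f⟫).re)
    (hLb : ∀ f : H, Filter.Tendsto (fun x => L x f) (nhdsWithin b (Set.Ioo a b)) (nhds (Lb f)))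
    (hLa : ∀ f : H, Filter.Tendsto (fun x => L x f) (nhdsWithin a (Set.Ioo a b)) (nhds (La f)))
    (sq : ℝ → (H →L[ℂ] H)) (sqA : H →L[ℂ] H)
    (hsq : ∀ x ∈ Set.Ioo a b,
      IsSelfAdjoint (sq x) ∧ (∀ f : H, 0 ≤ ⟪sq x f, f⟫) ∧ sq x ∘L sq x = L x)
    (hsqA : IsSelfAdjoint sqA ∧ (∀ f : H, 0 ≤ ⟪sqA f, f⟫) ∧ sqA ∘L sqA = La)
    (hran : ∀ x ∈ Set.Ioo a b, Set.range (sqA : H → H) ⊆ Set.range ((sq x : H →L[ℂ] H) : H → H))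
    (h : H) (hh : h ∈ closure (Set.range ((La : H →L[ℂ] H) : H → H)))
    (v : ℝ → H)
    (hv : ∀ x ∈ Set.Ioo a b,
      sq x (v x) = sqA h ∧ ∀ u : H, sq x u = 0 → ⟪v x, u⟫ = 0) :
    Filter.Tendsto (fun x => ‖v x‖ ^ 2) (nhdsWithin a (Set.Ioo a b)) (nhds (‖h‖ ^ 2)) := by
  obtain ⟨hsaA, hposA, hsqAsq⟩ := hsqA
  have symA : ∀ z u : H, ⟪sqA z, u⟫ = ⟪z, sqA u⟫ := fun z u => hsaA.isSymmetric z u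
  haveI hNB : (nhdsWithin a (Set.Ioo a b)).NeBot := by
    refine mem_closure_iff_nhdsWithin_neBot.1 ?_
    rw [closure_Ioo hab.ne]
    exact Set.left_mem_Icc.2 hab.le
  have innRe : ∀ z : H, (⟪z, z⟫).re = ‖z‖ ^ 2 := by
    intro z
    have := @inner_self_eq_norm_sq ℂ H _ _ _ z
    simpa using this
  have innNorm : ∀ z : H, ‖⟪z, z⟫‖ = ‖z‖ ^ 2 := by
    intro z
    rw [@inner_self_eq_norm_sq_to_K ℂ, ← RCLike.ofReal_pow, RCLike.norm_ofReal,
      abs_of_nonneg (sq_nonneg _)]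
  -- re⟪La u, u⟫ = ‖sqA u‖²
  have e1 : ∀ u : H, (⟪La u, u⟫).re = ‖sqA u‖ ^ 2 := by
    intro u
    have hLau : La u = sqA (sqA u) := by rw [← hsqAsq]; rfl
    rw [hLau, symA (sqA u) u, innRe]
  -- re⟪L x u, u⟫ = ‖sq x u‖²
  have e2 : ∀ x ∈ Set.Ioo a b, ∀ u : H, (⟪L x u, u⟫).re = ‖sq x u‖ ^ 2 := by
    intro x hx u
    obtain ⟨hsx, _, hsx2⟩ := hsq x hx
    have symx : ∀ z w : H, ⟪sq x z, w⟫ = ⟪z, sq x w⟫ := fun z w => hsx.isSymmetric z w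
    have hLxu : L x u = sq x (sq x u) := by rw [← hsx2]; rfl
    rw [hLxu, symx (sq x u) u, innRe]
  -- strong convergence of the quadratic forms
  have tinner : ∀ u : H, Filter.Tendsto (fun x => (⟪L x u, u⟫).re)
      (nhdsWithin a (Set.Ioo a b)) (nhds ((⟪La u, u⟫).re)) := fun u =>
    (Complex.continuous_re.tendsto _).comp ((hLa u).inner tendsto_const_nhds)
  -- re⟪La u,u⟫ ≤ re⟪L x u,u⟫ for x ∈ (a,b)
  have haLe : ∀ x ∈ Set.Ioo a b, ∀ u : H, (⟪La u, u⟫).re ≤ (⟪L x u, u⟫).re := by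
    intro x hx u
    refine le_of_tendsto (tinner u) ?_
    have h1 : ∀ᶠ y in nhdsWithin a (Set.Ioo a b), y < x :=
      Filter.eventually_iff_exists_mem.2 ⟨Set.Ioo a b ∩ Set.Iio x,
        inter_mem_nhdsWithin _ (isOpen_Iio.mem_nhds hx.1), fun y hy => hy.2⟩
    have h2 : ∀ᶠ y in nhdsWithin a (Set.Ioo a b), y ∈ Set.Ioo a b := self_mem_nhdsWithin
    filter_upwards [h1, h2] with y hy1 hy2
    exact hmono y hy2 x hx hy1.le u
  -- ‖sqA u‖ ≤ ‖sq x u‖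
  have normA_le : ∀ x ∈ Set.Ioo a b, ∀ u : H, ‖sqA u‖ ≤ ‖sq x u‖ := by
    intro x hx u
    have := haLe x hx u
    rw [e1 u, e2 x hx u] at this
    nlinarith [norm_nonneg (sqA u), norm_nonneg (sq x u)]
  -- key Cauchy–Schwarz estimate
  have key : ∀ x ∈ Set.Ioo a b, ∀ u : H, ‖⟪h, sqA u⟫‖ ≤ ‖v x‖ * ‖sq x u‖ := by
    intro x hx u
    obtain ⟨hsx, _, _⟩ := hsq x hx
    have symx : ∀ z w : H, ⟪sq x z, w⟫ = ⟪z, sq x w⟫ := fun z w => hsx.isSymmetric z w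
    have heq : ⟪h, sqA u⟫ = ⟪v x, sq x u⟫ := by
      rw [← symA h u, ← (hv x hx).1, symx (v x) u]
    rw [heq]
    exact norm_inner_le_norm _ _
  -- upper bound ‖v x‖ ≤ ‖h‖
  have upper : ∀ x ∈ Set.Ioo a b, ‖v x‖ ≤ ‖h‖ := by
    intro x hx
    obtain ⟨hsx, _, _⟩ := hsq x hx
    have symx : ∀ z w : H, ⟪sq x z, w⟫ = ⟪z, sq x w⟫ := fun z w => hsx.isSymmetric z w
    set K : Submodule ℂ H := LinearMap.range (sq x : H →ₗ[ℂ] H) with hK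
    have hvK : v x ∈ Kᗮᗮ := by
      rw [Submodule.mem_orthogonal]
      intro u hu
      have hTu : sq x u = 0 := by
        refine (inner_self_eq_zero (𝕜 := ℂ)).1 ?_
        have h0 : ⟪sq x (sq x u), u⟫ = 0 :=
          (Submodule.mem_orthogonal K u).1 hu (sq x (sq x u)) ⟨sq x u, rfl⟩
        rw [symx (sq x u) u] at h0
        exact h0
      have h0 := (hv x hx).2 u hTu
      rw [← inner_conj_symm, h0, map_zero]
    rw [Submodule.orthogonal_orthogonal_eq_closure] at hvK
    have hvC : v x ∈ {w : H | ‖⟪v x, w⟫‖ ≤ ‖h‖ * ‖w‖} := by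
      have hclosed : IsClosed {w : H | ‖⟪(v x : H), w⟫‖ ≤ ‖h‖ * ‖w‖} :=
        isClosed_le ((continuous_const.inner continuous_id).norm)
          (continuous_const.mul continuous_norm)
      have hsub : (K : Set H) ⊆ {w : H | ‖⟪(v x : H), w⟫‖ ≤ ‖h‖ * ‖w‖} := by
        rintro _ ⟨z, rfl⟩
        show ‖⟪v x, sq x z⟫‖ ≤ ‖h‖ * ‖sq x z‖
        have heq : ⟪v x, sq x z⟫ = ⟪h, sqA z⟫ := by
          rw [← symx (v x) z, (hv x hx).1, symA h z]
        calc ‖⟪v x, sq x z⟫‖ = ‖⟪h, sqA z⟫‖ := by rw [heq]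
          _ ≤ ‖h‖ * ‖sqA z‖ := norm_inner_le_norm _ _
          _ ≤ ‖h‖ * ‖sq x z‖ :=
              mul_le_mul_of_nonneg_left (normA_le x hx z) (norm_nonneg h)
      exact closure_minimal hsub hclosed hvK
    have hineq : ‖v x‖ ^ 2 ≤ ‖h‖ * ‖v x‖ := by
      have h1 : ‖⟪v x, v x⟫‖ ≤ ‖h‖ * ‖v x‖ := hvC
      rw [innNorm (v x)] at h1
      exact h1
    rcases eq_or_lt_of_le (norm_nonneg (v x)) with h0 | h0
    · rw [← h0]; exact norm_nonneg h
    · nlinarith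
  -- main limit via order topology
  rw [tendsto_order]
  constructor
  · -- c < ‖h‖² → eventually c < ‖v x‖²
    intro c hc
    rcases lt_or_ge c 0 with h0 | h0
    · filter_upwards with x
      exact h0.trans_le (sq_nonneg _)
    · have hhpos : 0 < ‖h‖ ^ 2 := lt_of_le_of_lt h0 hc
      set c' : ℝ := (c + ‖h‖ ^ 2) / 2 with hc'
      have hc'pos : 0 < c' := by rw [hc']; linarith
      have hcc' : c < c' := by rw [hc']; linarith
      have hc'h : c' < ‖h‖ ^ 2 := by rw [hc']; linarith
      set U : Set H := {w : H | c' * ‖w‖ ^ 2 < ‖⟪h, w⟫‖ ^ 2} with hUdef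
      have hUopen : IsOpen U :=
        isOpen_lt (continuous_const.mul (continuous_norm.pow 2))
          (((continuous_const.inner continuous_id).norm).pow 2)
      have hhU : h ∈ U := by
        simp only [hUdef, Set.mem_setOf_eq, innNorm h]
        nlinarith
      have hclos : h ∈ closure (Set.range (sqA : H → H)) := by
        refine closure_mono ?_ hh
        rintro _ ⟨z, rfl⟩
        exact ⟨sqA z, by rw [← hsqAsq]; rfl⟩
      obtain ⟨w, hwU, hwr⟩ := _root_.mem_closure_iff.1 hclos U hUopen hhU
      obtain ⟨u, rfl⟩ := hwr
      -- hwU : c' * ‖sqA u‖^2 < ‖⟪h, sqA u⟫‖^2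
      have hwU' : c' * ‖sqA u‖ ^ 2 < ‖⟪h, sqA u⟫‖ ^ 2 := hwU
      have hAupos : 0 < ‖sqA u‖ := by
        by_contra hcon
        push_neg at hcon
        have hz : sqA u = 0 := norm_eq_zero.1 (le_antisymm hcon (norm_nonneg _))
        rw [hz] at hwU'
        simp at hwU'
      have hlt : ‖sqA u‖ ^ 2 < ‖⟪h, sqA u⟫‖ ^ 2 / c' := by
        rw [lt_div_iff₀ hc'pos]; linarith
      have hev := (tinner u).eventually_lt_const (by rw [e1 u]; exact hlt)
      filter_upwards [hev, self_mem_nhdsWithin] with x hx1 hx2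
      have hxe : ‖sq x u‖ ^ 2 < ‖⟪h, sqA u⟫‖ ^ 2 / c' := by
        rw [← e2 x hx2 u]; exact hx1
      have h3 := key x hx2 u
      have h4 : ‖sqA u‖ ≤ ‖sq x u‖ := normA_le x hx2 u
      have hsqpos : 0 < ‖sq x u‖ := lt_of_lt_of_le hAupos h4
      have h5 : c' * ‖sq x u‖ ^ 2 < ‖⟪h, sqA u⟫‖ ^ 2 := by
        rw [lt_div_iff₀ hc'pos] at hxe; linarith
      nlinarith [h3, hsqpos, hcc', h5, norm_nonneg (v x), norm_nonneg (⟪h, sqA u⟫ : ℂ)]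
  · intro c hc
    filter_upwards [self_mem_nhdsWithin] with x hx
    have := upper x hx
    nlinarith [norm_nonneg (v x), norm_nonneg h]
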